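/- Let ℓ ≥ 1 be an integer, m ∈ ℝ, and for 1 ≤ k ≤ ℓ let D_k denote the operator (D_k f)(x) = f'(x) + k·tanh(x) f(x). Then for every (ℓ+2)-times continuously differentiable function f : ℝ → ℂ and every x ∈ ℝ, (D₁∘D₂∘⋯∘D_ℓ)(−f'' − ℓ(ℓ+1) sech²(·) f + m² f)(x) = (−∂ₓ² + m²)((D₁∘D₂∘⋯∘D_ℓ) f)(x), where in the composition D_ℓ is applied first and D₁ last. -/

import Mathlib

noncomputable section

/-- `sech x = 1 / cosh x`. -/
def sech (x : ℝ) : ℝ := 1 / Real.cosh x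

/-- The operator `D_k f = f' + k tanh · f`. -/
def Dk (k : ℕ) (f : ℝ → ℂ) (x : ℝ) : ℂ := deriv f x + (k : ℂ) * (Real.tanh x : ℂ) * f x

/-- The composition `D₁ ∘ D₂ ∘ ⋯ ∘ D_ℓ`, with `D_ℓ` applied first and `D₁` last. -/
def Dcomp : ℕ → (ℝ → ℂ) → ℝ → ℂ
  | 0, f => f
  | n + 1, f => Dcomp n (Dk (n + 1) f)

/-- The Schrödinger operator of level `k`. -/
def Lop (k : ℕ) (m : ℝ) (f : ℝ → ℂ) (y : ℝ) : ℂ :=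
  -(deriv (deriv f) y) - (k : ℂ) * ((k : ℂ) + 1) * (sech y : ℂ) ^ 2 * f y + (m : ℂ) ^ 2 * f y

lemma cosh_ne (x : ℝ) : Real.cosh x ≠ 0 := (Real.cosh_pos x).ne'

lemma hasDerivAt_tanh (x : ℝ) : HasDerivAt Real.tanh (sech x ^ 2) x := by
  have h : HasDerivAt (fun y => Real.sinh y / Real.cosh y) _ x :=
    (Real.hasDerivAt_sinh x).div (Real.hasDerivAt_cosh x) (cosh_ne x)
  have hfun : Real.tanh = fun y => Real.sinh y / Real.cosh y := by
    funext y; exact Real.tanh_eq_sinh_div_cosh y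
  rw [hfun]
  convert h using 1
  have h1 : Real.cosh x * Real.cosh x - Real.sinh x * Real.sinh x = 1 := by
    nlinarith [Real.cosh_sq_sub_sinh_sq x]
  rw [h1, sech]
  field_simp

lemma hasDerivAt_sech (x : ℝ) : HasDerivAt sech (-(sech x * Real.tanh x)) x := by
  have h : HasDerivAt (fun y => (Real.cosh y)⁻¹) _ x := ((Real.hasDerivAt_cosh x).inv (cosh_ne x))
  have hfun : sech = fun y => (Real.cosh y)⁻¹ := by
    funext y; simp [sech, one_div]
  rw [hfun]
  convert h using 1
  simp only [sech, Real.tanh_eq_sinh_div_cosh]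
  field_simp

/-- Complex tanh helper. -/
lemma hasDerivAt_tanhC (x : ℝ) :
    HasDerivAt (fun y : ℝ => (Real.tanh y : ℂ)) ((sech x : ℂ) ^ 2) x := by
  have h := (hasDerivAt_tanh x).ofReal_comp
  have : ((sech x ^ 2 : ℝ) : ℂ) = (sech x : ℂ) ^ 2 := by push_cast; ring
  rw [this] at h
  exact h

lemma hasDerivAt_sechSqC (x : ℝ) :
    HasDerivAt (fun y : ℝ => (sech y : ℂ) ^ 2)
      (-2 * (sech x : ℂ) ^ 2 * (Real.tanh x : ℂ)) x := by
  have h0 := (hasDerivAt_sech x).ofReal_comp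
  have h : HasDerivAt (fun y : ℝ => (sech y : ℂ) * (sech y : ℂ)) _ x := h0.mul h0
  have hfe : (fun y : ℝ => (sech y : ℂ) * (sech y : ℂ)) = fun y : ℝ => (sech y : ℂ) ^ 2 := by
    funext y; ring
  rw [hfe] at h
  convert h using 1
  push_cast
  ring

lemma contDiff_tanhC : ContDiff ℝ ⊤ (fun y : ℝ => (Real.tanh y : ℂ)) := by
  have h : ContDiff ℝ ⊤ Real.tanh := by
    have : Real.tanh = fun y => Real.sinh y / Real.cosh y := by
      funext y; exact Real.tanh_eq_sinh_div_cosh y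
    rw [this]
    exact Real.contDiff_sinh.div Real.contDiff_cosh (fun y => cosh_ne y)
  exact Complex.ofRealCLM.contDiff.comp h

lemma contDiff_deriv_of (n : ℕ) (f : ℝ → ℂ) (hf : ContDiff ℝ (n + 1 : ℕ) f) :
    ContDiff ℝ (n : ℕ) (deriv f) := by
  have h : ContDiff ℝ ((n : ℕ∞) + 1) f := by exact_mod_cast hf
  rcases contDiff_succ_iff_deriv.mp h with ⟨-, h2⟩
  first
  | exact h2
  | exact h2.2

/-- The ladder (conjugation) identity at one step. -/
lemma ladder (k : ℕ) (m : ℝ) (f : ℝ → ℂ) (hf : ContDiff ℝ 3 f) :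
    Dk (k + 1) (Lop (k + 1) m f) = Lop k m (Dk (k + 1) f) := by
  have hf1 : Differentiable ℝ f := hf.differentiable (by norm_num)
  have hf' : ContDiff ℝ 2 (deriv f) := by
    have := contDiff_deriv_of 2 f (by exact_mod_cast hf)
    exact_mod_cast this
  have hf1' : Differentiable ℝ (deriv f) := hf'.differentiable (by norm_num)
  have hf'' : ContDiff ℝ 1 (deriv (deriv f)) := by
    have := contDiff_deriv_of 1 (deriv f) (by exact_mod_cast hf')
    exact_mod_cast this
  have hf1'' : Differentiable ℝ (deriv (deriv f)) := hf''.differentiable (by norm_num)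
  set c : ℂ := ((k + 1 : ℕ) : ℂ) with hc
  -- first derivative of Dk (k+1) f, as a function
  have hD1 : deriv (Dk (k + 1) f) = fun y =>
      deriv (deriv f) y + c * ((sech y : ℂ) ^ 2 * f y
        + (Real.tanh y : ℂ) * deriv f y) := by
    funext y
    have hA : HasDerivAt (fun z => deriv f z) (deriv (deriv f) y) y :=
      (hf1' y).hasDerivAt
    have hB : HasDerivAt (fun z => c * (Real.tanh z : ℂ) * f z)
        (c * ((sech y : ℂ) ^ 2 * f y + (Real.tanh y : ℂ) * deriv f y)) y := by
      have h : HasDerivAt (fun z => c * ((Real.tanh z : ℂ) * f z)) _ y :=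
        ((hasDerivAt_tanhC y).mul ((hf1 y).hasDerivAt)).const_mul c
      have heq : (fun z => c * ((Real.tanh z : ℂ) * f z))
          = fun z => c * (Real.tanh z : ℂ) * f z := by
        funext z; ring
      rw [heq] at h
      exact h
    have h := hA.add hB
    exact h.deriv
  funext x
  set T := (Real.tanh x : ℂ) with hT
  set S := ((sech x : ℂ)) ^ 2 with hS
  set F0 := f x with hF0
  set F1 := deriv f x with hF1
  set F2 := deriv (deriv f) x with hF2
  set F3 := deriv (deriv (deriv f)) x with hF3
  -- derivative of Lop (k+1) m f at x
  have hdL : deriv (Lop (k + 1) m f) x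
      = -(F3) - (c * (c + 1)) * ((-2 * S * T) * F0 + S * F1) + (m : ℂ) ^ 2 * F1 := by
    have hA : HasDerivAt (fun y => -(deriv (deriv f) y)) (-F3) x :=
      ((hf1'' x).hasDerivAt).neg
    have hB : HasDerivAt (fun y => c * (c + 1) * (sech y : ℂ) ^ 2 * f y)
        ((c * (c + 1)) * ((-2 * S * T) * F0 + S * F1)) x := by
      have hSS := (hasDerivAt_sechSqC x).const_mul (c * (c + 1))
      have h : HasDerivAt (fun y => c * (c + 1) * ((sech y : ℂ) ^ 2) * f y) _ x :=
        hSS.mul ((hf1 x).hasDerivAt)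
      have heq : (fun y => c * (c + 1) * ((sech y : ℂ) ^ 2) * f y)
          = fun y => c * (c + 1) * (sech y : ℂ) ^ 2 * f y := rfl
      rw [heq] at h
      convert h using 1
      rw [← hT, ← hS, ← hF0, ← hF1]
      ring
    have hC : HasDerivAt (fun y => (m : ℂ) ^ 2 * f y) ((m : ℂ) ^ 2 * F1) x :=
      ((hf1 x).hasDerivAt).const_mul _
    have h := (hA.sub hB).add hC
    have hfun : Lop (k + 1) m f = fun y =>
        -(deriv (deriv f) y) - c * (c + 1) * (sech y : ℂ) ^ 2 * f y + (m : ℂ) ^ 2 * f y := by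
      funext y
      show _ - ((k + 1 : ℕ) : ℂ) * (((k + 1 : ℕ) : ℂ) + 1) * _ * _ + _ = _
      rw [hc]
    rw [hfun]
    exact h.deriv
  -- second derivative of Dk (k+1) f at x
  have hd2 : deriv (deriv (Dk (k + 1) f)) x
      = F3 + c * ((-2 * S * T) * F0 + S * F1 + (S * F1 + T * F2)) := by
    rw [hD1]
    have hA : HasDerivAt (fun y => deriv (deriv f) y) F3 x := (hf1'' x).hasDerivAt
    have hB : HasDerivAt (fun y => (sech y : ℂ) ^ 2 * f y + (Real.tanh y : ℂ) * deriv f y)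
        ((-2 * S * T) * F0 + S * F1 + (S * F1 + T * F2)) x := by
      have h1 := (hasDerivAt_sechSqC x).mul ((hf1 x).hasDerivAt)
      have h2 := (hasDerivAt_tanhC x).mul ((hf1' x).hasDerivAt)
      exact h1.add h2
    exact (hA.add (hB.const_mul c)).deriv
  -- now unfold both sides
  show deriv (Lop (k + 1) m f) x + ((k + 1 : ℕ) : ℂ) * T * Lop (k + 1) m f x
      = -(deriv (deriv (Dk (k + 1) f)) x)
        - (k : ℂ) * ((k : ℂ) + 1) * S * Dk (k + 1) f x + (m : ℂ) ^ 2 * Dk (k + 1) f x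
  have hLval : Lop (k + 1) m f x
      = -(F2) - (c * (c + 1)) * S * F0 + (m : ℂ) ^ 2 * F0 := by
    show -(F2) - ((k + 1 : ℕ) : ℂ) * (((k + 1 : ℕ) : ℂ) + 1) * S * F0 + (m : ℂ) ^ 2 * F0 = _
    rw [hc]
  have hDval : Dk (k + 1) f x = F1 + c * T * F0 := by
    show F1 + ((k + 1 : ℕ) : ℂ) * T * F0 = _
    rw [hc]
  rw [hdL, hd2, hLval, hDval]
  have hck : c = (k : ℂ) + 1 := by rw [hc]; push_cast; ring
  rw [hck]
  push_cast
  ring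

lemma contDiff_Dk (k n : ℕ) (f : ℝ → ℂ) (hf : ContDiff ℝ (n + 1 : ℕ) f) :
    ContDiff ℝ (n : ℕ) (Dk k f) := by
  have hderiv : ContDiff ℝ (n : ℕ) (deriv f) := contDiff_deriv_of n f hf
  have htf : ContDiff ℝ (n : ℕ) (fun x => (k : ℂ) * (Real.tanh x : ℂ) * f x) :=
    (contDiff_const.mul (contDiff_tanhC.of_le le_top)).mul
      (hf.of_le (by exact_mod_cast Nat.le_succ n))
  exact hderiv.add htf

lemma main_identity (m : ℝ) : ∀ (n : ℕ) (f : ℝ → ℂ), ContDiff ℝ (n + 2 : ℕ) f →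
    Dcomp n (Lop n m f) = Lop 0 m (Dcomp n f) := by
  intro n
  induction n with
  | zero => intro f _; rfl
  | succ n ih =>
    intro f hf
    show Dcomp n (Dk (n + 1) (Lop (n + 1) m f)) = Lop 0 m (Dcomp n (Dk (n + 1) f))
    rw [ladder n m f (hf.of_le (by exact_mod_cast by omega))]
    exact ih (Dk (n + 1) f) (contDiff_Dk (n + 1) (n + 2) f (by exact_mod_cast hf))

/-- The conjugation identity
`D₁⋯D_ℓ (−∂ₓ² − ℓ(ℓ+1) sech² + m²) = (−∂ₓ² + m²) D₁⋯D_ℓ` for the Pöschl–Teller hierarchy. -/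
theorem conjugation_identity (ℓ : ℕ) (hℓ : 1 ≤ ℓ) (m : ℝ) (f : ℝ → ℂ)
    (hf : ContDiff ℝ (ℓ + 2 : ℕ) f) (x : ℝ) :
    Dcomp ℓ
        (fun y => -(deriv (deriv f) y) - (ℓ : ℂ) * ((ℓ : ℂ) + 1) * (sech y : ℂ) ^ 2 * f y
          + (m : ℂ) ^ 2 * f y) x
      = -(deriv (deriv (Dcomp ℓ f)) x) + (m : ℂ) ^ 2 * Dcomp ℓ f x := by
  have h := main_identity m ℓ f hf
  have hx := congrFun h x
  show Dcomp ℓ (Lop ℓ m f) x = _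
  rw [hx]
  show -(deriv (deriv (Dcomp ℓ f)) x)
      - ((0 : ℕ) : ℂ) * (((0 : ℕ) : ℂ) + 1) * (sech x : ℂ) ^ 2 * Dcomp ℓ f x
      + (m : ℂ) ^ 2 * Dcomp ℓ f x = _
  push_cast
  ring
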